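/- Let q ≥ 4 be an integer, let Π be a finite projective plane of order q, and let μ be an integer with 2 ≤ μ ≤ √q. Then Π contains a (1, μ)-saturating set of size at most 2·(μ+1)·√((q+1)·ln(q+1)) + 2. -/

import Mathlib

set_option maxHeartbeats 1000000

open scoped Classical in
/-- The number of secants of a point set `S` through a point `Q`, counted with multiplicity:
the multiplicity of a line `ℓ` is `C(#(ℓ ∩ S), 2)`. -/
noncomputable def secantCount (L : Type*) {P : Type*} [Membership P L] [Fintype L]
    (S : Set P) (Q : P) : ℕ :=
  ∑ ℓ : L, if Q ∈ ℓ then ({p ∈ S | p ∈ ℓ}.ncard).choose 2 else 0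

/-- A point set `S` in a projective plane (with line type `L`) is *(1,μ)-saturating* if for
every point `Q` not in `S` the number of secants of `S` through `Q`, counted with
multiplicity, is at least `μ`. -/
def IsMuSaturating (L : Type*) {P : Type*} [Membership P L] [Fintype L]
    (S : Set P) (μ : ℕ) : Prop :=
  ∀ Q : P, Q ∉ S → μ ≤ secantCount L S Q

lemma descFact_ratio (n : ℕ) : ∀ (k t : ℕ), t ≤ n →
    t.descFactorial k * n ^ k ≤ n.descFactorial k * t ^ k := by
  intro k
  induction k with
  | zero => simp
  | succ k ih =>
    intro t ht
    rw [Nat.descFactorial_succ, Nat.descFactorial_succ, pow_succ, pow_succ]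
    have h1 : (t - k) * n ≤ (n - k) * t := by
      calc (t - k) * n = t * n - k * n := by rw [Nat.sub_mul]
        _ ≤ t * n - k * t := Nat.sub_le_sub_left (Nat.mul_le_mul_left k ht) _
        _ = (n - k) * t := by rw [Nat.sub_mul, Nat.mul_comm t n]
    calc (t - k) * t.descFactorial k * (n ^ k * n)
        = ((t - k) * n) * (t.descFactorial k * n ^ k) := by ring
      _ ≤ ((n - k) * t) * (n.descFactorial k * t ^ k) :=
          Nat.mul_le_mul h1 (ih t ht)
      _ = (n - k) * n.descFactorial k * (t ^ k * t) := by ring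


lemma choose_ratio {n k t : ℕ} (ht : t ≤ n) :
    t.choose k * n ^ k ≤ n.choose k * t ^ k := by
  have h := descFact_ratio n k t ht
  rw [Nat.descFactorial_eq_factorial_mul_choose, Nat.descFactorial_eq_factorial_mul_choose] at h
  have hk : 0 < k.factorial := Nat.factorial_pos k
  calc t.choose k * n ^ k ≤ t.choose k * n ^ k := le_rfl
    _ ≤ n.choose k * t ^ k := by
        have := h
        rw [Nat.mul_assoc, Nat.mul_assoc] at this
        exact Nat.le_of_mul_le_mul_left this hk

lemma count_ineq (q μ δ : ℕ) (hq : 4 ≤ q) (hμ : 2 ≤ μ) (hμδ : μ + 1 ≤ δ) (hδq : δ ≤ q)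
    (hxδ : ((μ : ℝ) + 1) * Real.sqrt (((q : ℝ) + 1) * Real.log ((q : ℝ) + 1)) ≤ (δ : ℝ)) :
    ((q ^ 2 + q + 1) * (Nat.choose δ (μ - 1) * Nat.choose (q - (δ - (μ - 1))) δ) : ℝ)
      < (Nat.choose q δ : ℝ) := by
  push_cast
  set s := δ - (μ - 1) with hs_def
  have hsδ : s ≤ δ := Nat.sub_le _ _
  have hsq : s ≤ q := hsδ.trans hδq
  have hq0 : (0 : ℝ) < q := by positivity
  have hqR : (4 : ℝ) ≤ (q : ℝ) := by exact_mod_cast hq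
  have hμR : (2 : ℝ) ≤ (μ : ℝ) := by exact_mod_cast hμ
  have hδqR : (δ : ℝ) ≤ (q : ℝ) := by exact_mod_cast hδq
  set Λ := Real.log ((q : ℝ) + 1) with hΛ_def
  have hΛ1 : 1 < Λ := by
    rw [hΛ_def, Real.lt_log_iff_exp_lt (by linarith)]
    calc Real.exp 1 < 2.7182818286 := Real.exp_one_lt_d9
      _ < (q : ℝ) + 1 := by linarith
  have hlogq_pos : 0 < Real.log q := Real.log_pos (by linarith)
  have hlogq_lt : Real.log q < Λ := by
    rw [hΛ_def]
    exact Real.log_lt_log (by linarith) (by linarith)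
  have hscast : (s : ℝ) = (δ : ℝ) - (μ : ℝ) + 1 := by
    have h' : s + μ = δ + 1 := by omega
    have := congrArg (Nat.cast : ℕ → ℝ) h'
    push_cast at this
    linarith
  have hδ2 : ((μ : ℝ) + 1) ^ 2 * (((q : ℝ) + 1) * Λ) ≤ (δ : ℝ) ^ 2 := by
    have h1 : (0 : ℝ) ≤ ((μ : ℝ) + 1) := by linarith
    have h2 : (0 : ℝ) ≤ Real.sqrt (((q : ℝ) + 1) * Λ) := Real.sqrt_nonneg _
    have hsq' : Real.sqrt (((q : ℝ) + 1) * Λ) ^ 2 = ((q : ℝ) + 1) * Λ :=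
      Real.sq_sqrt (by positivity)
    calc ((μ : ℝ) + 1) ^ 2 * (((q : ℝ) + 1) * Λ)
        = (((μ : ℝ) + 1) * Real.sqrt (((q : ℝ) + 1) * Λ)) ^ 2 := by
          rw [mul_pow, hsq']
      _ ≤ (δ : ℝ) ^ 2 := by
          apply pow_le_pow_left₀ (by positivity) hxδ
  -- main exponent inequality
  have hexp : 2 * Λ + ((μ : ℝ) - 1) * Real.log q < (s : ℝ) * δ / q := by
    rw [lt_div_iff₀ hq0]
    have hmain : ((μ : ℝ) + 1) * Λ * q ≤ (s : ℝ) * δ := by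
      rw [hscast]
      have h1 : (1 : ℝ) ≤ ((μ : ℝ) + 1) * Λ := by nlinarith
      have h2 : ((μ : ℝ) - 1) * q ≤ (μ : ℝ) * q + μ + 1 := by nlinarith
      have h3 : (μ : ℝ) * q + μ + 1 ≤ ((μ : ℝ) + 1) * Λ * ((μ : ℝ) * q + μ + 1) :=
        le_mul_of_one_le_left (by positivity) h1
      have h4 : ((μ : ℝ) - 1) * δ ≤ ((μ : ℝ) - 1) * q :=
        mul_le_mul_of_nonneg_left hδqR (by linarith)
      have h5 : ((δ : ℝ) - μ + 1) * δ = (δ : ℝ) ^ 2 - ((μ : ℝ) - 1) * δ := by ring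
      have key : ((μ : ℝ) + 1) ^ 2 * (((q : ℝ) + 1) * Λ) - ((μ : ℝ) + 1) * Λ * ((μ : ℝ) * q + μ + 1)
          = ((μ : ℝ) + 1) * Λ * q := by ring
      linarith [hδ2]
    have hstrict : (2 * Λ + ((μ : ℝ) - 1) * Real.log q) * q < ((μ : ℝ) + 1) * Λ * q := by
      have : ((μ : ℝ) - 1) * Real.log q < ((μ : ℝ) - 1) * Λ := by
        apply mul_lt_mul_of_pos_left hlogq_lt (by linarith)
      have h2 : 2 * Λ + ((μ : ℝ) - 1) * Real.log q < ((μ : ℝ) + 1) * Λ := by nlinarith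
      exact mul_lt_mul_of_pos_right h2 hq0
    linarith
  -- now the choose bounds
  set t := q - s with ht_def
  have htq : t ≤ q := Nat.sub_le _ _
  have htcast : (t : ℝ) = (q : ℝ) - s := by
    have h' : t + s = q := Nat.sub_add_cancel hsq
    have := congrArg (Nat.cast : ℕ → ℝ) h'
    push_cast at this
    linarith
  have hratio : (t.choose δ : ℝ) * (q : ℝ) ^ δ ≤ (q.choose δ : ℝ) * (t : ℝ) ^ δ := by
    exact_mod_cast Nat.cast_le.mpr (choose_ratio (k := δ) htq)
  have hchoose_pos : (0 : ℝ) < (q.choose δ : ℝ) := by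
    exact_mod_cast Nat.choose_pos hδq
  have hμ1cast : ((μ - 1 : ℕ) : ℝ) = (μ : ℝ) - 1 := by
    have : (1 : ℕ) ≤ μ := by omega
    push_cast [this]
    ring
  set A : ℝ := (q : ℝ) ^ 2 + q + 1 with hA_def
  set C : ℝ := (δ.choose (μ - 1) : ℝ) with hC_def
  have hA_nonneg : (0 : ℝ) ≤ A := by positivity
  have hC_nonneg : (0 : ℝ) ≤ C := by positivity
  have hAC : A * C < Real.exp ((s : ℝ) * δ / q) := by
    have hA' : A ≤ Real.exp (2 * Λ) := by
      have : Real.exp (2 * Λ) = ((q : ℝ) + 1) ^ 2 := by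
        rw [two_mul, Real.exp_add, hΛ_def, Real.exp_log (by linarith)]
        ring
      rw [this, hA_def]
      nlinarith
    have hC' : C ≤ Real.exp (((μ : ℝ) - 1) * Real.log q) := by
      have e2 : Real.exp (((μ : ℝ) - 1) * Real.log q) = (q : ℝ) ^ (μ - 1 : ℕ) := by
        rw [← hμ1cast, Real.exp_nat_mul, Real.exp_log hq0]
      rw [e2, hC_def]
      calc (δ.choose (μ - 1) : ℝ) ≤ ((δ ^ (μ - 1 : ℕ) : ℕ) : ℝ) := by
            exact_mod_cast Nat.choose_le_pow δ (μ - 1)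
        _ ≤ (q : ℝ) ^ (μ - 1 : ℕ) := by
            push_cast
            exact pow_le_pow_left₀ (by positivity) hδqR _
    calc A * C ≤ Real.exp (2 * Λ) * Real.exp (((μ : ℝ) - 1) * Real.log q) :=
          mul_le_mul hA' hC' hC_nonneg (Real.exp_nonneg _)
      _ = Real.exp (2 * Λ + ((μ : ℝ) - 1) * Real.log q) := (Real.exp_add _ _).symm
      _ < Real.exp ((s : ℝ) * δ / q) := Real.exp_lt_exp.mpr hexp
  have ht_exp : (t : ℝ) ^ δ ≤ (q : ℝ) ^ δ * Real.exp (-((s : ℝ) * δ / q)) := by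
    have h1 : (t : ℝ) ≤ (q : ℝ) * Real.exp (-(s : ℝ) / q) := by
      have he := Real.add_one_le_exp (-(s : ℝ) / q)
      have h2 : (q : ℝ) * (-(s : ℝ) / q + 1) = (q : ℝ) - s := by
        field_simp
        ring
      calc (t : ℝ) = (q : ℝ) - s := htcast
        _ = (q : ℝ) * (-(s : ℝ) / q + 1) := h2.symm
        _ ≤ (q : ℝ) * Real.exp (-(s : ℝ) / q) :=
            mul_le_mul_of_nonneg_left he (by positivity)
    calc (t : ℝ) ^ δ ≤ ((q : ℝ) * Real.exp (-(s : ℝ) / q)) ^ δ :=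
          pow_le_pow_left₀ (by positivity) h1 δ
      _ = (q : ℝ) ^ δ * Real.exp (-(s : ℝ) / q) ^ δ := mul_pow _ _ _
      _ = (q : ℝ) ^ δ * Real.exp (-((s : ℝ) * δ / q)) := by
          rw [← Real.exp_nat_mul]
          congr 1
          ring
  have hqδpos : (0 : ℝ) < (q : ℝ) ^ δ := by positivity
  have hfinal : A * (C * (t.choose δ : ℝ)) * (q : ℝ) ^ δ < (q.choose δ : ℝ) * (q : ℝ) ^ δ := by
    have hEpos : (0 : ℝ) < (q : ℝ) ^ δ * Real.exp (-((s : ℝ) * δ / q)) := by positivity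
    calc A * (C * (t.choose δ : ℝ)) * (q : ℝ) ^ δ
        = (A * C) * ((t.choose δ : ℝ) * (q : ℝ) ^ δ) := by ring
      _ ≤ (A * C) * ((q.choose δ : ℝ) * (t : ℝ) ^ δ) :=
          mul_le_mul_of_nonneg_left hratio (by positivity)
      _ = (q.choose δ : ℝ) * ((A * C) * (t : ℝ) ^ δ) := by ring
      _ ≤ (q.choose δ : ℝ) * ((A * C) * ((q : ℝ) ^ δ * Real.exp (-((s : ℝ) * δ / q)))) := by
          apply mul_le_mul_of_nonneg_left _ (le_of_lt hchoose_pos)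
          exact mul_le_mul_of_nonneg_left ht_exp (by positivity)
      _ < (q.choose δ : ℝ) * (Real.exp ((s : ℝ) * δ / q) * ((q : ℝ) ^ δ * Real.exp (-((s : ℝ) * δ / q)))) := by
          apply mul_lt_mul_of_pos_left _ hchoose_pos
          exact mul_lt_mul_of_pos_right hAC hEpos
      _ = (q.choose δ : ℝ) * (q : ℝ) ^ δ := by
          rw [show Real.exp ((s : ℝ) * δ / q) * ((q : ℝ) ^ δ * Real.exp (-((s : ℝ) * δ / q)))
              = (q : ℝ) ^ δ * (Real.exp ((s : ℝ) * δ / q) * Real.exp (-((s : ℝ) * δ / q))) from by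
                ring, ← Real.exp_add]
          simp
  have hlt := lt_of_mul_lt_mul_right hfinal (le_of_lt hqδpos)
  calc ((q : ℝ) ^ 2 + q + 1) * ((δ.choose (μ - 1) : ℝ) * (t.choose δ : ℝ))
      = A * (C * (t.choose δ : ℝ)) := by rw [hA_def, hC_def]
    _ < (q.choose δ : ℝ) := hlt

/-- Abstract counting lemma: there is a `δ`-subset of `B` meeting every `T Q` in
at least `μ` elements. -/
lemma exists_good_subset {α β : Type*} [DecidableEq α] (q μ δ : ℕ)
    (hq : 4 ≤ q) (hμ : 2 ≤ μ) (hμδ : μ + 1 ≤ δ) (hδq : δ ≤ q)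
    (hxδ : ((μ : ℝ) + 1) * Real.sqrt (((q : ℝ) + 1) * Real.log ((q : ℝ) + 1)) ≤ (δ : ℝ))
    (B : Finset α) (hB : B.card = q)
    (Off : Finset β) (hOff : Off.card ≤ q ^ 2 + q + 1)
    (T : β → Finset α) (hT : ∀ Q ∈ Off, T Q ⊆ B ∧ (T Q).card = δ) :
    ∃ K : Finset α, K ⊆ B ∧ K.card = δ ∧ ∀ Q ∈ Off, μ ≤ ((T Q) ∩ K).card := by
  classical
  set s := δ - (μ - 1) with hs_def
  have hsδ : s ≤ δ := Nat.sub_le _ _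
  set Bad : β → Finset (Finset α) :=
    fun Q => (B.powersetCard δ).filter (fun K => ((T Q) ∩ K).card < μ) with hBad_def
  have hBadcard : ∀ Q ∈ Off, (Bad Q).card ≤ δ.choose (μ - 1) * (q - s).choose δ := by
    intro Q hQ
    obtain ⟨hTB, hTcard⟩ := hT Q hQ
    have hsub : Bad Q ⊆ ((T Q).powersetCard s).biUnion (fun T' => (B \ T').powersetCard δ) := by
      intro K hK
      rw [hBad_def, Finset.mem_filter, Finset.mem_powersetCard] at hK
      obtain ⟨⟨hKB, hKcard⟩, hbad⟩ := hK
      have h1 : ((T Q) \ K).card + ((T Q) ∩ K).card = (T Q).card :=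
        Finset.card_sdiff_add_card_inter (T Q) K
      have hdiff : s ≤ ((T Q) \ K).card := by omega
      obtain ⟨T', hT'sub, hT'card⟩ := Finset.exists_subset_card_eq hdiff
      refine Finset.mem_biUnion.mpr ⟨T', ?_, ?_⟩
      · exact Finset.mem_powersetCard.mpr ⟨hT'sub.trans (Finset.sdiff_subset), hT'card⟩
      · refine Finset.mem_powersetCard.mpr ⟨?_, hKcard⟩
        intro x hx
        refine Finset.mem_sdiff.mpr ⟨hKB hx, fun hxT' => ?_⟩
        exact (Finset.mem_sdiff.mp (hT'sub hxT')).2 hx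
    have h2 : (Bad Q).card ≤ ∑ T' ∈ (T Q).powersetCard s, ((B \ T').powersetCard δ).card :=
      (Finset.card_le_card hsub).trans Finset.card_biUnion_le
    have h3 : ∀ T' ∈ (T Q).powersetCard s, ((B \ T').powersetCard δ).card ≤ (q - s).choose δ := by
      intro T' hT'
      rw [Finset.mem_powersetCard] at hT'
      rw [Finset.card_powersetCard, Finset.card_sdiff_of_subset (hT'.1.trans hTB), hB, hT'.2]
    calc (Bad Q).card ≤ ∑ T' ∈ (T Q).powersetCard s, ((B \ T').powersetCard δ).card := h2
      _ ≤ ∑ _T' ∈ (T Q).powersetCard s, (q - s).choose δ := Finset.sum_le_sum h3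
      _ = δ.choose s * (q - s).choose δ := by
          rw [Finset.sum_const, Finset.card_powersetCard, hTcard, smul_eq_mul]
      _ = δ.choose (μ - 1) * (q - s).choose δ := by
          rw [hs_def, Nat.choose_symm (by omega)]
  set G : Finset (Finset α) :=
    (B.powersetCard δ).filter (fun K => ∃ Q ∈ Off, ((T Q) ∩ K).card < μ) with hG_def
  have hGsub : G ⊆ Off.biUnion Bad := by
    intro K hK
    rw [hG_def, Finset.mem_filter] at hK
    obtain ⟨hKmem, Q, hQ, hbad⟩ := hK
    exact Finset.mem_biUnion.mpr ⟨Q, hQ, by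
      rw [hBad_def]; exact Finset.mem_filter.mpr ⟨hKmem, hbad⟩⟩
  have hGcard : G.card < (B.powersetCard δ).card := by
    have h1 : G.card ≤ (q ^ 2 + q + 1) * (δ.choose (μ - 1) * (q - s).choose δ) :=
      calc G.card ≤ (Off.biUnion Bad).card := Finset.card_le_card hGsub
        _ ≤ ∑ Q ∈ Off, (Bad Q).card := Finset.card_biUnion_le
        _ ≤ ∑ _Q ∈ Off, δ.choose (μ - 1) * (q - s).choose δ := Finset.sum_le_sum hBadcard
        _ = Off.card * (δ.choose (μ - 1) * (q - s).choose δ) := by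
            rw [Finset.sum_const, smul_eq_mul]
        _ ≤ (q ^ 2 + q + 1) * (δ.choose (μ - 1) * (q - s).choose δ) :=
            Nat.mul_le_mul_right _ hOff
    have h2 : ((q ^ 2 + q + 1) * (δ.choose (μ - 1) * (q - s).choose δ) : ℝ) < q.choose δ :=
      count_ineq q μ δ hq hμ hμδ hδq hxδ
    have h3 : (q ^ 2 + q + 1) * (δ.choose (μ - 1) * (q - s).choose δ) < q.choose δ := by
      exact_mod_cast h2
    rw [Finset.card_powersetCard, hB]
    omega
  have hne : ¬ (B.powersetCard δ ⊆ G) := fun h =>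
    absurd (Finset.card_le_card h) (by omega)
  obtain ⟨K, hKmem, hKG⟩ := Finset.not_subset.mp hne
  have hKmem' := Finset.mem_powersetCard.mp hKmem
  refine ⟨K, hKmem'.1, hKmem'.2, fun Q hQ => ?_⟩
  by_contra hlt
  exact hKG (by
    rw [hG_def, Finset.mem_filter]
    exact ⟨hKmem, Q, hQ, by omega⟩)

section Geometry


open Configuration Configuration.ProjectivePlane

variable {P L : Type*} [Membership P L] [Fintype P] [Fintype L]

open scoped Classical

lemma ncard_sep_eq_filter (S : Finset P) (ℓ : L) :
    {p ∈ (↑S : Set P) | p ∈ ℓ}.ncard = (S.filter (fun p => p ∈ ℓ)).card := by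
  rw [show {p ∈ (↑S : Set P) | p ∈ ℓ} = ↑(S.filter (fun p => p ∈ ℓ)) by ext p; simp]
  exact Set.ncard_coe_finset _

lemma le_secantCount_of_lines (S : Finset P) (Q : P) (T : Finset L)
    (hT : ∀ ℓ ∈ T, Q ∈ ℓ ∧ 2 ≤ (S.filter (fun p => p ∈ ℓ)).card) :
    T.card ≤ secantCount L (↑S : Set P) Q := by
  unfold secantCount
  calc T.card = ∑ _ℓ ∈ T, 1 := by simp
    _ ≤ ∑ ℓ ∈ T, (if Q ∈ ℓ then ({p ∈ (↑S : Set P) | p ∈ ℓ}.ncard).choose 2 else 0) := by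
        apply Finset.sum_le_sum
        intro ℓ hℓ
        rw [if_pos (hT ℓ hℓ).1, ncard_sep_eq_filter]
        exact Nat.succ_le_of_lt (Nat.choose_pos (hT ℓ hℓ).2)
    _ ≤ ∑ ℓ : L, (if Q ∈ ℓ then ({p ∈ (↑S : Set P) | p ∈ ℓ}.ncard).choose 2 else 0) :=
        Finset.sum_le_sum_of_subset (Finset.subset_univ T)

lemma le_secantCount_single (S : Finset P) (Q : P) (ℓ : L) (hQ : Q ∈ ℓ) :
    ((S.filter (fun p => p ∈ ℓ)).card).choose 2 ≤ secantCount L (↑S : Set P) Q := by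
  unfold secantCount
  calc ((S.filter (fun p => p ∈ ℓ)).card).choose 2
      = (if Q ∈ ℓ then ({p ∈ (↑S : Set P) | p ∈ ℓ}.ncard).choose 2 else 0) := by
        rw [if_pos hQ, ncard_sep_eq_filter]
    _ ≤ ∑ m : L, (if Q ∈ m then ({p ∈ (↑S : Set P) | p ∈ m}.ncard).choose 2 else 0) :=
        Finset.single_le_sum
          (f := fun m : L => if Q ∈ m then ({p ∈ (↑S : Set P) | p ∈ m}.ncard).choose 2 else 0)
          (fun m _ => Nat.zero_le _) (Finset.mem_univ ℓ)

variable [Configuration.ProjectivePlane P L]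

lemma mu_le_choose_two {μ n : ℕ} (hμn : μ + 1 ≤ n) : μ ≤ n.choose 2 := by
  calc μ ≤ (μ + 1).choose 2 := by
        rw [Nat.choose_two_right]
        rw [Nat.le_div_iff_mul_le (by norm_num)]
        simp only [Nat.add_sub_cancel]
        cases μ with
        | zero => simp
        | succ k => nlinarith
    _ ≤ n.choose 2 := Nat.choose_le_choose 2 hμn

lemma construction_saturating
    (μ : ℕ) (ℓ1 ℓ2 : L) (hne : ℓ1 ≠ ℓ2) (X : P) (hX1 : X ∈ ℓ1) (hX2 : X ∈ ℓ2)
    (K1 K2 : Finset P)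
    (hK1 : ∀ p ∈ K1, p ∈ ℓ1 ∧ p ≠ X) (hK2 : ∀ p ∈ K2, p ∈ ℓ2 ∧ p ≠ X)
    (hc1 : μ + 1 ≤ K1.card) (hc2 : μ + 1 ≤ K2.card)
    (hmatch : ∀ Q : P, Q ∉ ℓ1 → Q ∉ ℓ2 →
      μ ≤ (K1.filter (fun a => ∃ b ∈ K2, ∃ m : L, Q ∈ m ∧ a ∈ m ∧ b ∈ m)).card) :
    IsMuSaturating L (↑(K1 ∪ K2) : Set P) μ := by
  intro Q _hQ
  by_cases hQ1 : Q ∈ ℓ1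
  · -- the line ℓ1 has at least μ+1 points of S
    have hsub : K1 ⊆ (K1 ∪ K2).filter (fun p => p ∈ ℓ1) := fun p hp =>
      Finset.mem_filter.mpr ⟨Finset.mem_union_left _ hp, (hK1 p hp).1⟩
    have hcard : μ + 1 ≤ ((K1 ∪ K2).filter (fun p => p ∈ ℓ1)).card :=
      le_trans hc1 (Finset.card_le_card hsub)
    exact le_trans (mu_le_choose_two hcard) (le_secantCount_single _ _ ℓ1 hQ1)
  by_cases hQ2 : Q ∈ ℓ2
  · have hsub : K2 ⊆ (K1 ∪ K2).filter (fun p => p ∈ ℓ2) := fun p hp =>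
      Finset.mem_filter.mpr ⟨Finset.mem_union_right _ hp, (hK2 p hp).1⟩
    have hcard : μ + 1 ≤ ((K1 ∪ K2).filter (fun p => p ∈ ℓ2)).card :=
      le_trans hc2 (Finset.card_le_card hsub)
    exact le_trans (mu_le_choose_two hcard) (le_secantCount_single _ _ ℓ2 hQ2)
  -- main case : Q outside both lines
  set M := K1.filter (fun a => ∃ b ∈ K2, ∃ m : L, Q ∈ m ∧ a ∈ m ∧ b ∈ m) with hM_def
  have hex : ∀ a : P, ∃ m : L, a ∈ M → (Q ∈ m ∧ a ∈ m ∧ ∃ b ∈ K2, b ∈ m ∧ b ≠ a) := by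
    intro a
    by_cases ha : a ∈ M
    · obtain ⟨haK1, b, hbK2, m, hQm, ham, hbm⟩ := Finset.mem_filter.mp ha
      refine ⟨m, fun _ => ⟨hQm, ham, b, hbK2, hbm, fun hba => ?_⟩⟩
      have ha1 : a ∈ ℓ1 := (hK1 a haK1).1
      have ha2 : a ∈ ℓ2 := hba ▸ (hK2 b hbK2).1
      have : a = X ∨ ℓ1 = ℓ2 := Nondegenerate.eq_or_eq ha1 hX1 ha2 hX2
      exact (hK1 a haK1).2 (this.resolve_right hne)
    · obtain ⟨m, -⟩ := Nondegenerate.exists_line (L := L) a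
      exact ⟨m, fun h => absurd h ha⟩
  choose f hf using hex
  have hinj : Set.InjOn f ↑M := by
    intro a ha a' ha' hfa
    obtain ⟨hQm, ham, -⟩ := hf a ha
    obtain ⟨hQm', ham', -⟩ := hf a' ha'
    have ha1 : a ∈ ℓ1 := (hK1 a (Finset.mem_filter.mp ha).1).1
    have ha1' : a' ∈ ℓ1 := (hK1 a' (Finset.mem_filter.mp ha').1).1
    have ham'2 : a' ∈ f a := hfa ▸ ham'
    rcases Nondegenerate.eq_or_eq ham ham'2 ha1 ha1' with h | h
    · exact h
    · exact absurd (h ▸ hQm) hQ1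
  calc μ ≤ M.card := hmatch Q hQ1 hQ2
    _ = (M.image f).card := (Finset.card_image_of_injOn hinj).symm
    _ ≤ secantCount L (↑(K1 ∪ K2) : Set P) Q := by
        apply le_secantCount_of_lines
        intro m hm
        obtain ⟨a, ha, rfl⟩ := Finset.mem_image.mp hm
        obtain ⟨hQm, ham, b, hbK2, hbm, hba⟩ := hf a ha
        refine ⟨hQm, ?_⟩
        have hpair : ({a, b} : Finset P) ⊆ (K1 ∪ K2).filter (fun p => p ∈ f a) := by
          intro x hx
          rcases Finset.mem_insert.mp hx with rfl | hx
          · exact Finset.mem_filter.mpr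
              ⟨Finset.mem_union_left _ (Finset.mem_filter.mp ha).1, ham⟩
          · rw [Finset.mem_singleton.mp hx]
            exact Finset.mem_filter.mpr ⟨Finset.mem_union_right _ hbK2, hbm⟩
        calc 2 = ({a, b} : Finset P).card := by
              rw [Finset.card_insert_of_notMem (fun h => hba (Finset.mem_singleton.mp h).symm), Finset.card_singleton]
          _ ≤ _ := Finset.card_le_card hpair

lemma exists_projection (ℓ1 ℓ2 : L) (hne : ℓ1 ≠ ℓ2) (X : P) (hX1 : X ∈ ℓ1) (hX2 : X ∈ ℓ2)
    (K1 : Finset P) (hK1 : ∀ p ∈ K1, p ∈ ℓ1 ∧ p ≠ X)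
    (B : Finset P) (hBmem : ∀ p : P, p ∈ B ↔ p ∈ ℓ2 ∧ p ≠ X)
    (Q : P) (hQ1 : Q ∉ ℓ1) (hQ2 : Q ∉ ℓ2) :
    ∃ T : Finset P, T ⊆ B ∧ T.card = K1.card ∧ ∀ K : Finset P,
      (T ∩ K).card ≤ (K1.filter (fun a => ∃ b ∈ K, ∃ m : L, Q ∈ m ∧ a ∈ m ∧ b ∈ m)).card := by
  have hex : ∀ a : P, ∃ b : P, a ∈ K1 → (b ∈ B ∧ ∃ m : L, Q ∈ m ∧ a ∈ m ∧ b ∈ m) := by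
    intro a
    by_cases ha : a ∈ K1
    · have ha1 : a ∈ ℓ1 := (hK1 a ha).1
      have haQ : Q ≠ a := fun h => hQ1 (h ▸ ha1)
      have hm := HasLines.mkLine_ax (L := L) haQ
      set m := HasLines.mkLine (L := L) haQ with hm_def
      have hmℓ2 : m ≠ ℓ2 := fun h => hQ2 (h ▸ hm.1)
      have hb := HasPoints.mkPoint_ax (P := P) hmℓ2
      set b := HasPoints.mkPoint (P := P) hmℓ2 with hb_def
      refine ⟨b, fun _ => ⟨(hBmem b).mpr ⟨hb.2, fun hbX => ?_⟩, m, hm.1, hm.2, hb.1⟩⟩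
      have hXm : X ∈ m := hbX ▸ hb.1
      have := Nondegenerate.eq_or_eq hm.2 hXm ha1 hX1
      rcases this with h | h
      · exact (hK1 a ha).2 h
      · exact hQ1 (h ▸ hm.1)
    · exact ⟨X, fun h => absurd h ha⟩
  choose π hπ using hex
  have hinj : Set.InjOn π ↑K1 := by
    intro a ha a' ha' heq
    obtain ⟨hbB, m, hQm, ham, hbm⟩ := hπ a ha
    obtain ⟨hbB', m', hQm', ham', hbm'⟩ := hπ a' ha'
    have hbQ : π a ≠ Q := fun h => hQ2 (h ▸ ((hBmem _).mp hbB).1)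
    have hbm'2 : π a ∈ m' := heq ▸ hbm'
    have hmm' : m = m' :=
      (Nondegenerate.eq_or_eq hQm hbm hQm' hbm'2).resolve_left (fun h => hbQ h.symm)
    have hmℓ1 : m ≠ ℓ1 := fun h => hQ1 (h ▸ hQm)
    exact (Nondegenerate.eq_or_eq ham (hmm' ▸ ham') (hK1 a ha).1
      (hK1 a' ha').1).resolve_right hmℓ1
  refine ⟨K1.image π, ?_, Finset.card_image_of_injOn hinj, ?_⟩
  · intro b hb
    obtain ⟨a, ha, rfl⟩ := Finset.mem_image.mp hb
    exact (hπ a ha).1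
  · intro K
    have him : (K1.filter (fun a => π a ∈ K)).image π = (K1.image π) ∩ K := by
      ext b
      constructor
      · intro hb
        obtain ⟨a, ha, rfl⟩ := Finset.mem_image.mp hb
        obtain ⟨haK1, haπ⟩ := Finset.mem_filter.mp ha
        exact Finset.mem_inter.mpr ⟨Finset.mem_image_of_mem π haK1, haπ⟩
      · intro hb
        obtain ⟨hb1, hb2⟩ := Finset.mem_inter.mp hb
        obtain ⟨a, ha, rfl⟩ := Finset.mem_image.mp hb1
        exact Finset.mem_image_of_mem π (Finset.mem_filter.mpr ⟨ha, hb2⟩)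
    calc ((K1.image π) ∩ K).card = ((K1.filter (fun a => π a ∈ K)).image π).card := by rw [him]
      _ = (K1.filter (fun a => π a ∈ K)).card :=
          Finset.card_image_of_injOn (hinj.mono (fun y hy =>
            Finset.mem_coe.mpr (Finset.mem_of_mem_filter _ (Finset.mem_coe.mp hy))))
      _ ≤ (K1.filter (fun a => ∃ b ∈ K, ∃ m : L, Q ∈ m ∧ a ∈ m ∧ b ∈ m)).card := by
          apply Finset.card_le_card
          intro a ha
          obtain ⟨haK1, haπ⟩ := Finset.mem_filter.mp ha
          obtain ⟨-, m, hQm, ham, hπm⟩ := hπ a haK1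
          exact Finset.mem_filter.mpr ⟨haK1, π a, haπ, m, hQm, ham, hπm⟩

end Geometry

open Configuration Configuration.ProjectivePlane in
open scoped Classical in
theorem mu_saturating_bound_mu_le_sqrt_q (q : ℕ) (hq : 4 ≤ q)
    (P L : Type*) [Fintype P] [Fintype L] [Membership P L]
    [Configuration.ProjectivePlane P L]
    (horder : Configuration.ProjectivePlane.order P L = q)
    (μ : ℕ) (hμ₁ : 2 ≤ μ) (hμ₂ : (μ : ℝ) ≤ Real.sqrt q) :
    ∃ S : Finset P, IsMuSaturating L (↑S : Set P) μ ∧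
      (S.card : ℝ) ≤ 2 * ((μ : ℝ) + 1) * Real.sqrt ((q + 1) * Real.log (q + 1)) + 2 := by
  classical
  have hqR : (4 : ℝ) ≤ (q : ℝ) := by exact_mod_cast hq
  have hμR : (2 : ℝ) ≤ (μ : ℝ) := by exact_mod_cast hμ₁
  set Λ := Real.log ((q : ℝ) + 1) with hΛ_def
  have hΛ1 : 1 < Λ := by
    rw [hΛ_def, Real.lt_log_iff_exp_lt (by linarith)]
    calc Real.exp 1 < 2.7182818286 := Real.exp_one_lt_d9
      _ < (q : ℝ) + 1 := by linarith
  have hsqrt1 : 1 ≤ Real.sqrt (((q : ℝ) + 1) * Λ) := by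
    have h1 : (1 : ℝ) ≤ ((q : ℝ) + 1) * Λ := by nlinarith
    calc (1 : ℝ) = Real.sqrt 1 := Real.sqrt_one.symm
      _ ≤ Real.sqrt (((q : ℝ) + 1) * Λ) := Real.sqrt_le_sqrt h1
  set x : ℝ := ((μ : ℝ) + 1) * Real.sqrt (((q : ℝ) + 1) * Λ) with hx_def
  have hx_nonneg : 0 ≤ x := by positivity
  set δ := ⌈x⌉₊ with hδ_def
  have hxδ : x ≤ (δ : ℝ) := Nat.le_ceil x
  have hδx : (δ : ℝ) ≤ x + 1 := (Nat.ceil_lt_add_one hx_nonneg).le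
  have hμδ : μ + 1 ≤ δ := by
    have h1 : ((μ : ℝ) + 1) ≤ x := by
      rw [hx_def]
      nlinarith
    have h2 : ((μ + 1 : ℕ) : ℝ) ≤ (δ : ℝ) := by push_cast; linarith
    exact_mod_cast h2
  have hμq1 : μ + 1 ≤ q := by
    have h2 : Real.sqrt (q : ℝ) ≤ (q : ℝ) / 2 := by
      rw [show (q : ℝ) / 2 = Real.sqrt (((q : ℝ) / 2) ^ 2) from
        (Real.sqrt_sq (by linarith)).symm]
      apply Real.sqrt_le_sqrt
      nlinarith
    have h3 : ((μ + 1 : ℕ) : ℝ) ≤ (q : ℝ) := by push_cast; nlinarith [hμ₂]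
    exact_mod_cast h3
  -- geometric setup
  obtain ⟨p₁, p₂, p₃, l₁, l₂, l₃, h₁₂, h₁₃, h₂₁, h₂₂, h₂₃, h₃₁, h₃₂, h₃₃⟩ :=
    Configuration.ProjectivePlane.exists_config (P := P) (L := L)
  have hne : l₁ ≠ l₂ := fun h => h₂₁ (h ▸ h₂₂)
  have hX := HasPoints.mkPoint_ax (P := P) hne
  set X := HasPoints.mkPoint (P := P) hne with hX_def
  set A : Finset P := Finset.univ.filter (fun p => p ∈ l₁ ∧ p ≠ X) with hA_def
  set B : Finset P := Finset.univ.filter (fun p => p ∈ l₂ ∧ p ≠ X) with hB_def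
  have hAmem : ∀ p : P, p ∈ A ↔ p ∈ l₁ ∧ p ≠ X := by intro p; simp [hA_def]
  have hBmem : ∀ p : P, p ∈ B ↔ p ∈ l₂ ∧ p ≠ X := by intro p; simp [hB_def]
  have line_card : ∀ ℓ : L, (Finset.univ.filter (fun p : P => p ∈ ℓ)).card = q + 1 := by
    intro ℓ
    have h := Configuration.ProjectivePlane.pointCount_eq P ℓ
    rw [horder] at h
    rw [← h, Configuration.pointCount, Nat.card_eq_fintype_card, Fintype.card_subtype]
  have erase_card : ∀ (ℓ : L), X ∈ ℓ →
      (Finset.univ.filter (fun p : P => p ∈ ℓ ∧ p ≠ X)).card = q := by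
    intro ℓ hXℓ
    have he : Finset.univ.filter (fun p : P => p ∈ ℓ ∧ p ≠ X)
        = (Finset.univ.filter (fun p : P => p ∈ ℓ)).erase X := by
      ext p
      simp only [Finset.mem_filter, Finset.mem_erase, Finset.mem_univ, true_and]
      tauto
    rw [he, Finset.card_erase_of_mem (by simp [hXℓ]), line_card]
    omega
  have hAcard : A.card = q := by rw [hA_def]; exact erase_card l₁ hX.1
  have hBcard : B.card = q := by rw [hB_def]; exact erase_card l₂ hX.2
  have hRHS : 2 * ((μ : ℝ) + 1) * Real.sqrt (((q : ℝ) + 1) * Real.log ((q : ℝ) + 1)) + 2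
      = 2 * x + 2 := by rw [hx_def, hΛ_def]; ring
  by_cases hcase : q ≤ δ
  · -- use the two full (punctured) lines
    refine ⟨A ∪ B, ?_, ?_⟩
    · apply construction_saturating μ l₁ l₂ hne X hX.1 hX.2 A B
        (fun p hp => (hAmem p).mp hp) (fun p hp => (hBmem p).mp hp)
        (by rw [hAcard]; exact hμq1) (by rw [hBcard]; exact hμq1)
      intro Q hQ1 hQ2
      obtain ⟨T, hTB, hTcard, hTle⟩ := exists_projection l₁ l₂ hne X hX.1 hX.2 A
        (fun p hp => (hAmem p).mp hp) B hBmem Q hQ1 hQ2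
      have h1 : T ∩ B = T := Finset.inter_eq_left.mpr hTB
      have h2 := hTle B
      rw [h1, hTcard, hAcard] at h2
      exact le_trans (by omega : μ ≤ q) h2
    · have hcard : ((A ∪ B).card : ℝ) ≤ 2 * (q : ℝ) := by
        have := Finset.card_union_le A B
        rw [hAcard, hBcard] at this
        have : ((A ∪ B).card : ℝ) ≤ ((q + q : ℕ) : ℝ) := by exact_mod_cast this
        push_cast at this
        linarith
      have hqδ : (q : ℝ) ≤ (δ : ℝ) := by exact_mod_cast hcase
      rw [hRHS]
      linarith
  · -- probabilistic (counting) construction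
    push_neg at hcase
    have hδq : δ ≤ q := le_of_lt hcase
    obtain ⟨K1, hK1A, hK1card⟩ := Finset.exists_subset_card_eq (hAcard ▸ hδq : δ ≤ A.card)
    set Off : Finset P := Finset.univ.filter (fun Q => Q ∉ l₁ ∧ Q ∉ l₂) with hOff_def
    have hOffcard : Off.card ≤ q ^ 2 + q + 1 := by
      calc Off.card ≤ Finset.univ.card := Finset.card_filter_le _ _
        _ = Fintype.card P := Finset.card_univ
        _ = q ^ 2 + q + 1 := by
            rw [Configuration.ProjectivePlane.card_points P L, horder]
    have hproj : ∀ Q : P, ∃ T : Finset P, Q ∈ Off → (T ⊆ B ∧ T.card = δ ∧ ∀ K : Finset P,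
        (T ∩ K).card ≤ (K1.filter
          (fun a => ∃ b ∈ K, ∃ m : L, Q ∈ m ∧ a ∈ m ∧ b ∈ m)).card) := by
      intro Q
      by_cases hQ : Q ∈ Off
      · obtain ⟨hQ1, hQ2⟩ := (Finset.mem_filter.mp hQ).2
        obtain ⟨T, hTB, hTcard, hTle⟩ := exists_projection l₁ l₂ hne X hX.1 hX.2 K1
          (fun p hp => (hAmem p).mp (hK1A hp)) B hBmem Q hQ1 hQ2
        exact ⟨T, fun _ => ⟨hTB, hTcard.trans hK1card, hTle⟩⟩
      · exact ⟨∅, fun h => absurd h hQ⟩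
    choose T hT using hproj
    obtain ⟨K, hKB, hKcard, hKgood⟩ := exists_good_subset q μ δ hq hμ₁ hμδ hδq
      hxδ B hBcard Off hOffcard T
      (fun Q hQ => ⟨((hT Q) hQ).1, ((hT Q) hQ).2.1⟩)
    refine ⟨K1 ∪ K, ?_, ?_⟩
    · apply construction_saturating μ l₁ l₂ hne X hX.1 hX.2 K1 K
        (fun p hp => (hAmem p).mp (hK1A hp)) (fun p hp => (hBmem p).mp (hKB hp))
        (by rw [hK1card]; exact hμδ) (by rw [hKcard]; exact hμδ)
      intro Q hQ1 hQ2
      have hQOff : Q ∈ Off := by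
        rw [hOff_def, Finset.mem_filter]
        exact ⟨Finset.mem_univ Q, hQ1, hQ2⟩
      calc μ ≤ ((T Q) ∩ K).card := hKgood Q hQOff
        _ ≤ _ := ((hT Q) hQOff).2.2 K
    · have hcard : ((K1 ∪ K).card : ℝ) ≤ 2 * (δ : ℝ) := by
        have h := Finset.card_union_le K1 K
        rw [hK1card, hKcard] at h
        have h2 : ((K1 ∪ K).card : ℝ) ≤ ((δ + δ : ℕ) : ℝ) := by exact_mod_cast h
        push_cast at h2
        linarith
      rw [hRHS]
      linarith
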